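/- Let b_H, d_M, d_W, β_MH, β_HM, β_WH, β_HW, γ_H, γ_M, γ_W, σ_H, K, H be positive reals. Let V be the 6×6 complex matrix with diagonal entries (γ_H+b_H, σ_H+b_H, γ_M+d_M, d_M, γ_W+d_W, d_W), entries V₂₁ = −γ_H, V₄₃ = −γ_M, V₆₅ = −γ_W, and all other entries zero. Let F_M be the 6×6 matrix whose only nonzero entries are (F_M)₁₄ = β_MH, (F_M)₁₆ = β_WH and (F_M)₃₂ = (β_HM/H)·K, and let F_W be the 6×6 matrix whose only nonzero entries are (F_W)₁₄ = β_MH, (F_W)₁₆ = β_WH and (F_W)₅₂ = (β_HW/H)·K. Then V is invertible, the spectral radius of F_M·V⁻¹ equals √(β_HM β_MH K γ_M γ_H / (H d_M (b_H+σ_H)(γ_M+d_M)(γ_H+b_H))), and the spectral radius of F_W·V⁻¹ equals √(β_HW β_WH K γ_W γ_H / (H d_W (b_H+σ_H)(γ_W+d_W)(γ_H+b_H))). -/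

import Mathlib

open Matrix Polynomial

set_option maxRecDepth 100000


private lemma cons_val_five {α : Type*} {m : ℕ} (x : α) (u : Fin m.succ.succ.succ.succ.succ → α) :
    Matrix.vecCons x u 5 =
      Matrix.vecHead (Matrix.vecTail (Matrix.vecTail (Matrix.vecTail (Matrix.vecTail u)))) :=
  rfl

set_option maxHeartbeats 1000000 in
private lemma mul2A (a a2 a4 a5 c1 c2 : ℂ) :
    (!![0, 0, a, a2, a4, a5; 0,0,0,0,0,0; c1, c2, 0, 0, 0, 0;
        0,0,0,0,0,0; 0,0,0,0,0,0; 0,0,0,0,0,0] : Matrix (Fin 6) (Fin 6) ℂ) *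
      !![0, 0, a, a2, a4, a5; 0,0,0,0,0,0; c1, c2, 0, 0, 0, 0;
        0,0,0,0,0,0; 0,0,0,0,0,0; 0,0,0,0,0,0] =
    !![a*c1, a*c2, 0, 0, 0, 0; 0,0,0,0,0,0; 0, 0, c1*a, c1*a2, c1*a4, c1*a5;
        0,0,0,0,0,0; 0,0,0,0,0,0; 0,0,0,0,0,0] := by
  ext i j
  fin_cases i <;> fin_cases j <;>
    simp [Matrix.mul_apply, Fin.sum_univ_six, cons_val_five, Matrix.vecHead, Matrix.vecTail,
      Function.comp]

set_option maxHeartbeats 1000000 in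
private lemma mul2B (a a2 a4 a5 c1 c2 : ℂ) :
    (!![0, 0, a, a2, a4, a5; 0,0,0,0,0,0; 0,0,0,0,0,0; 0,0,0,0,0,0;
        c1, c2, 0, 0, 0, 0; 0,0,0,0,0,0] : Matrix (Fin 6) (Fin 6) ℂ) *
      !![0, 0, a, a2, a4, a5; 0,0,0,0,0,0; 0,0,0,0,0,0; 0,0,0,0,0,0;
        c1, c2, 0, 0, 0, 0; 0,0,0,0,0,0] =
    !![a4*c1, a4*c2, 0, 0, 0, 0; 0,0,0,0,0,0; 0,0,0,0,0,0; 0,0,0,0,0,0;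
       0, 0, c1*a, c1*a2, c1*a4, c1*a5; 0,0,0,0,0,0] := by
  ext i j
  fin_cases i <;> fin_cases j <;>
    simp [Matrix.mul_apply, Fin.sum_univ_six, cons_val_five, Matrix.vecHead, Matrix.vecTail,
      Function.comp]

set_option maxHeartbeats 1000000 in
private lemma tri3A (a a2 a4 a5 c1 c2 s : ℂ) (hs : s = a * c1) :
    (!![0, 0, a, a2, a4, a5; 0,0,0,0,0,0; c1, c2, 0, 0, 0, 0;
        0,0,0,0,0,0; 0,0,0,0,0,0; 0,0,0,0,0,0] : Matrix (Fin 6) (Fin 6) ℂ) *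
      !![0, 0, a, a2, a4, a5; 0,0,0,0,0,0; c1, c2, 0, 0, 0, 0;
        0,0,0,0,0,0; 0,0,0,0,0,0; 0,0,0,0,0,0] *
      !![0, 0, a, a2, a4, a5; 0,0,0,0,0,0; c1, c2, 0, 0, 0, 0;
        0,0,0,0,0,0; 0,0,0,0,0,0; 0,0,0,0,0,0] =
    s • !![0, 0, a, a2, a4, a5; 0,0,0,0,0,0; c1, c2, 0, 0, 0, 0;
        0,0,0,0,0,0; 0,0,0,0,0,0; 0,0,0,0,0,0] := by
  subst hs
  rw [mul2A]
  ext i j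
  fin_cases i <;> fin_cases j <;>
    simp [Matrix.mul_apply, Fin.sum_univ_six, cons_val_five, Matrix.vecHead, Matrix.vecTail,
      Function.comp, Matrix.smul_apply, smul_eq_mul] <;> (try ring) <;> tauto

set_option maxHeartbeats 1000000 in
private lemma tri3B (a a2 a4 a5 c1 c2 s : ℂ) (hs : s = a4 * c1) :
    (!![0, 0, a, a2, a4, a5; 0,0,0,0,0,0; 0,0,0,0,0,0; 0,0,0,0,0,0;
        c1, c2, 0, 0, 0, 0; 0,0,0,0,0,0] : Matrix (Fin 6) (Fin 6) ℂ) *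
      !![0, 0, a, a2, a4, a5; 0,0,0,0,0,0; 0,0,0,0,0,0; 0,0,0,0,0,0;
        c1, c2, 0, 0, 0, 0; 0,0,0,0,0,0] *
      !![0, 0, a, a2, a4, a5; 0,0,0,0,0,0; 0,0,0,0,0,0; 0,0,0,0,0,0;
        c1, c2, 0, 0, 0, 0; 0,0,0,0,0,0] =
    s • !![0, 0, a, a2, a4, a5; 0,0,0,0,0,0; 0,0,0,0,0,0; 0,0,0,0,0,0;
        c1, c2, 0, 0, 0, 0; 0,0,0,0,0,0] := by
  subst hs
  rw [mul2B]
  ext i j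
  fin_cases i <;> fin_cases j <;>
    simp [Matrix.mul_apply, Fin.sum_univ_six, cons_val_five, Matrix.vecHead, Matrix.vecTail,
      Function.comp, Matrix.smul_apply, smul_eq_mul] <;> (try ring) <;> tauto

private lemma evA (a a2 a4 a5 c1 c2 r u w : ℂ) (h1 : a * w = r * u) (h2 : c1 * u = r * w) :
    (!![0, 0, a, a2, a4, a5; 0,0,0,0,0,0; c1, c2, 0, 0, 0, 0;
        0,0,0,0,0,0; 0,0,0,0,0,0; 0,0,0,0,0,0] : Matrix (Fin 6) (Fin 6) ℂ).mulVec
        ![u, 0, w, 0, 0, 0] = r • ![u, 0, w, 0, 0, 0] := by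
  funext i
  fin_cases i <;>
    simp [Matrix.mulVec, dotProduct, Fin.sum_univ_six, cons_val_five, Matrix.vecHead,
      Matrix.vecTail, Function.comp, h1, h2]

private lemma evB (a a2 a4 a5 c1 c2 r u w : ℂ) (h1 : a4 * w = r * u) (h2 : c1 * u = r * w) :
    (!![0, 0, a, a2, a4, a5; 0,0,0,0,0,0; 0,0,0,0,0,0; 0,0,0,0,0,0;
        c1, c2, 0, 0, 0, 0; 0,0,0,0,0,0] : Matrix (Fin 6) (Fin 6) ℂ).mulVec
        ![u, 0, 0, 0, w, 0] = r • ![u, 0, 0, 0, w, 0] := by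
  funext i
  fin_cases i <;>
    simp [Matrix.mulVec, dotProduct, Fin.sum_univ_six, cons_val_five, Matrix.vecHead,
      Matrix.vecTail, Function.comp, h1, h2]


lemma specRad_aux (M : Matrix (Fin 6) (Fin 6) ℂ) (r : ℝ) (hr : 0 ≤ r)
    (h3 : M * M * M = ((r : ℂ) * (r : ℂ)) • M)
    (v : Fin 6 → ℂ) (hv : v ≠ 0) (hev : M.mulVec v = (r : ℂ) • v) :
    spectralRadius ℂ M = ENNReal.ofReal r := by
  have hmem : (r : ℂ) ∈ spectrum ℂ M := by
    rw [spectrum.mem_iff]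
    intro hU
    have hN : (algebraMap ℂ (Matrix (Fin 6) (Fin 6) ℂ) (r : ℂ) - M).mulVec v = 0 := by
      rw [Algebra.algebraMap_eq_smul_one, sub_mulVec, smul_mulVec, one_mulVec, hev,
        sub_self]
    have hdet : (algebraMap ℂ (Matrix (Fin 6) (Fin 6) ℂ) (r : ℂ) - M).det = 0 :=
      (Matrix.exists_mulVec_eq_zero_iff).mp ⟨v, hv, hN⟩
    have := (Matrix.isUnit_iff_isUnit_det _).mp hU
    rw [hdet] at this
    exact not_isUnit_zero this
  have hub : ∀ μ ∈ spectrum ℂ M, ‖μ‖₊ ≤ r.toNNReal := by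
    intro μ hμ
    have hp : aeval M (X ^ 3 - C ((r : ℂ) * (r : ℂ)) * X) = 0 := by
      simp only [map_sub, _root_.map_mul, aeval_X_pow, aeval_C, aeval_X]
      rw [pow_succ, pow_two, h3]
      simp only [Algebra.algebraMap_eq_smul_one, smul_mul_assoc, smul_smul, one_mul]
      have h4 : ((r : ℂ) * r) • M = (r * r) • M := by
        rw [← algebraMap_smul ℂ (r * r) M]; norm_num
      rw [h4, sub_self]
    have hsub := spectrum.subset_polynomial_aeval M (X ^ 3 - C ((r : ℂ) * (r : ℂ)) * X)
    have hμ0 : eval μ (X ^ 3 - C ((r : ℂ) * (r : ℂ)) * X) ∈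
        spectrum ℂ (aeval M (X ^ 3 - C ((r : ℂ) * (r : ℂ)) * X)) :=
      hsub ⟨μ, hμ, rfl⟩
    rw [hp, spectrum.zero_eq] at hμ0
    simp only [eval_sub, eval_mul, eval_pow, eval_X, eval_C, Set.mem_singleton_iff] at hμ0
    have hfac : μ * (μ - r) * (μ + r) = 0 := by linear_combination hμ0
    have hle : ‖μ‖ ≤ r := by
      rcases mul_eq_zero.mp hfac with h | h
      · rcases mul_eq_zero.mp h with h | h
        · simp [h, hr]
        · simp [sub_eq_zero.mp h, abs_of_nonneg hr]
      · have : μ = -(r : ℂ) := eq_neg_of_add_eq_zero_left h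
        simp [this, abs_of_nonneg hr]
    rw [← Real.toNNReal_coe (r := ‖μ‖₊)]
    exact Real.toNNReal_le_toNNReal (by simpa using hle)
  have h2 : ‖(r : ℂ)‖₊ = r.toNNReal := by
    ext
    simp [Real.coe_toNNReal r hr, abs_of_nonneg hr]
  apply le_antisymm
  · rw [spectralRadius]
    refine iSup₂_le fun μ hμ => ?_
    rw [ENNReal.ofReal]
    exact_mod_cast ENNReal.coe_le_coe.mpr (hub μ hμ)
  · rw [spectralRadius]
    exact le_iSup₂_of_le (r : ℂ) hmem (by rw [h2]; rfl)

set_option maxHeartbeats 1000000 in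
theorem spectralRadius_next_generation_Wolbachia
    (bH dM dW βMH βHM βWH βHW γH γM γW σH K H : ℝ)
    (hbH : 0 < bH) (hdM : 0 < dM) (hdW : 0 < dW)
    (hβMH : 0 < βMH) (hβHM : 0 < βHM) (hβWH : 0 < βWH) (hβHW : 0 < βHW)
    (hγH : 0 < γH) (hγM : 0 < γM) (hγW : 0 < γW) (hσH : 0 < σH)
    (hK : 0 < K) (hH : 0 < H) :
    let V : Matrix (Fin 6) (Fin 6) ℂ :=
      !![(γH : ℂ) + (bH : ℂ), 0, 0, 0, 0, 0;
         -(γH : ℂ), (σH : ℂ) + (bH : ℂ), 0, 0, 0, 0;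
         0, 0, (γM : ℂ) + (dM : ℂ), 0, 0, 0;
         0, 0, -(γM : ℂ), (dM : ℂ), 0, 0;
         0, 0, 0, 0, (γW : ℂ) + (dW : ℂ), 0;
         0, 0, 0, 0, -(γW : ℂ), (dW : ℂ)]
    let FM : Matrix (Fin 6) (Fin 6) ℂ :=
      !![0, 0, 0, (βMH : ℂ), 0, (βWH : ℂ);
         0, 0, 0, 0, 0, 0;
         0, ((βHM : ℂ) / (H : ℂ)) * (K : ℂ), 0, 0, 0, 0;
         0, 0, 0, 0, 0, 0;
         0, 0, 0, 0, 0, 0;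
         0, 0, 0, 0, 0, 0]
    let FW : Matrix (Fin 6) (Fin 6) ℂ :=
      !![0, 0, 0, (βMH : ℂ), 0, (βWH : ℂ);
         0, 0, 0, 0, 0, 0;
         0, 0, 0, 0, 0, 0;
         0, 0, 0, 0, 0, 0;
         0, ((βHW : ℂ) / (H : ℂ)) * (K : ℂ), 0, 0, 0, 0;
         0, 0, 0, 0, 0, 0]
    IsUnit V ∧
      spectralRadius ℂ (FM * V⁻¹) =
        ENNReal.ofReal (Real.sqrt (βHM * βMH * K * γM * γH /
          (H * dM * (bH + σH) * (γM + dM) * (γH + bH)))) ∧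
      spectralRadius ℂ (FW * V⁻¹) =
        ENNReal.ofReal (Real.sqrt (βHW * βWH * K * γW * γH /
          (H * dW * (bH + σH) * (γW + dW) * (γH + bH)))) := by
  intro V FM FW
  have hA : (γH : ℂ) + bH ≠ 0 := by
    have : ((γH + bH : ℝ) : ℂ) ≠ 0 := Complex.ofReal_ne_zero.mpr (by positivity)
    push_cast at this; exact this
  have hB : (σH : ℂ) + bH ≠ 0 := by
    have : ((σH + bH : ℝ) : ℂ) ≠ 0 := Complex.ofReal_ne_zero.mpr (by positivity)
    push_cast at this; exact this
  have hC : (γM : ℂ) + dM ≠ 0 := by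
    have : ((γM + dM : ℝ) : ℂ) ≠ 0 := Complex.ofReal_ne_zero.mpr (by positivity)
    push_cast at this; exact this
  have hE : (γW : ℂ) + dW ≠ 0 := by
    have : ((γW + dW : ℝ) : ℂ) ≠ 0 := Complex.ofReal_ne_zero.mpr (by positivity)
    push_cast at this; exact this
  have hdM' : (dM : ℂ) ≠ 0 := Complex.ofReal_ne_zero.mpr hdM.ne'
  have hdW' : (dW : ℂ) ≠ 0 := Complex.ofReal_ne_zero.mpr hdW.ne'
  have hH' : (H : ℂ) ≠ 0 := Complex.ofReal_ne_zero.mpr hH.ne'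
  have hB2 : (bH : ℂ) + σH ≠ 0 := by
    have : ((bH + σH : ℝ) : ℂ) ≠ 0 := Complex.ofReal_ne_zero.mpr (by positivity)
    push_cast at this; exact this
  set W : Matrix (Fin 6) (Fin 6) ℂ :=
    !![1 / ((γH : ℂ) + bH), 0, 0, 0, 0, 0;
       (γH : ℂ) / (((γH : ℂ) + bH) * ((σH : ℂ) + bH)), 1 / ((σH : ℂ) + bH), 0, 0, 0, 0;
       0, 0, 1 / ((γM : ℂ) + dM), 0, 0, 0;
       0, 0, (γM : ℂ) / (((γM : ℂ) + dM) * (dM : ℂ)), 1 / (dM : ℂ), 0, 0;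
       0, 0, 0, 0, 1 / ((γW : ℂ) + dW), 0;
       0, 0, 0, 0, (γW : ℂ) / (((γW : ℂ) + dW) * (dW : ℂ)), 1 / (dW : ℂ)] with hW
  have hVW : V * W = 1 := by
    ext i j
    fin_cases i <;> fin_cases j <;>
      simp [V, hW, Matrix.mul_apply, Fin.sum_univ_six, cons_val_five, Matrix.vecHead,
        Matrix.vecTail, Function.comp, Matrix.one_apply] <;>
      (try field_simp) <;> (try ring)
  have hUnit : IsUnit V := by
    apply (Matrix.isUnit_iff_isUnit_det V).mpr
    apply IsUnit.of_mul_eq_one W.det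
    rw [← Matrix.det_mul, hVW, Matrix.det_one]
  have hVinv : V⁻¹ = W := Matrix.inv_eq_right_inv hVW
  refine ⟨hUnit, ?_, ?_⟩
  · -- F_M case
    set MM : Matrix (Fin 6) (Fin 6) ℂ :=
      !![0, 0, (βMH : ℂ) * γM / (((γM : ℂ) + dM) * dM), (βMH : ℂ) / dM,
           (βWH : ℂ) * γW / (((γW : ℂ) + dW) * dW), (βWH : ℂ) / dW;
         0, 0, 0, 0, 0, 0;
         (βHM : ℂ) / H * K * γH / (((γH : ℂ) + bH) * ((σH : ℂ) + bH)),
           (βHM : ℂ) / H * K / ((σH : ℂ) + bH), 0, 0, 0, 0;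
         0, 0, 0, 0, 0, 0;
         0, 0, 0, 0, 0, 0;
         0, 0, 0, 0, 0, 0] with hMMdef
    have hMM : FM * W = MM := by
      ext i j
      fin_cases i <;> fin_cases j <;>
        simp [FM, hW, hMMdef, Matrix.mul_apply, Fin.sum_univ_six, cons_val_five,
          Matrix.vecHead, Matrix.vecTail, Function.comp] <;> ring
    set rM : ℝ := Real.sqrt (βHM * βMH * K * γM * γH /
        (H * dM * (bH + σH) * (γM + dM) * (γH + bH))) with hrM
    have hfrac : (0:ℝ) ≤ βHM * βMH * K * γM * γH /
        (H * dM * (bH + σH) * (γM + dM) * (γH + bH)) := by positivity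
    have hsqR : rM * rM = βHM * βMH * K * γM * γH /
        (H * dM * (bH + σH) * (γM + dM) * (γH + bH)) := by
      rw [hrM]; exact Real.mul_self_sqrt hfrac
    have hsqC : (rM : ℂ) * rM = ((βHM * βMH * K * γM * γH /
        (H * dM * (bH + σH) * (γM + dM) * (γH + bH)) : ℝ) : ℂ) := by
      rw [← Complex.ofReal_mul, hsqR]
    have hdenM : (H : ℂ) * dM * ((bH : ℂ) + σH) * ((γM : ℂ) + dM) * ((γH : ℂ) + bH) ≠ 0 := by
      have : ((H * dM * (bH + σH) * (γM + dM) * (γH + bH) : ℝ) : ℂ) ≠ 0 :=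
        Complex.ofReal_ne_zero.mpr (by positivity)
      push_cast at this; exact this
    have hs : (rM : ℂ) * rM = ((βMH : ℂ) * γM / (((γM : ℂ) + dM) * dM)) *
        ((βHM : ℂ) / H * K * γH / (((γH : ℂ) + bH) * ((σH : ℂ) + bH))) := by
      rw [hsqC]; push_cast; rw [div_eq_iff hdenM]; field_simp; ring
    have h3 : MM * MM * MM = ((rM : ℂ) * rM) • MM := by
      rw [hMMdef]; exact tri3A _ _ _ _ _ _ _ hs
    have hrMnn : 0 ≤ rM := by rw [hrM]; positivity
    have hv : (![(rM : ℂ) * ((H : ℂ) * (((γH : ℂ) + bH) * ((σH : ℂ) + bH))), 0,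
        (βHM : ℂ) * K * γH, 0, 0, 0] : Fin 6 → ℂ) ≠ 0 := by
      intro h
      have := congrFun h 2
      simp [mul_eq_zero, Complex.ofReal_eq_zero, hβHM.ne', hK.ne', hγH.ne'] at this
    have h1 : ((βMH : ℂ) * γM / (((γM : ℂ) + dM) * dM)) * ((βHM : ℂ) * K * γH) =
        (rM : ℂ) * ((rM : ℂ) * ((H : ℂ) * (((γH : ℂ) + bH) * ((σH : ℂ) + bH)))) := by
      rw [show (rM : ℂ) * ((rM : ℂ) * ((H : ℂ) * (((γH : ℂ) + bH) * ((σH : ℂ) + bH)))) =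
          ((rM : ℂ) * (rM : ℂ)) * ((H : ℂ) * (((γH : ℂ) + bH) * ((σH : ℂ) + bH))) from by ring,
        hs]
      field_simp
    have h2 : ((βHM : ℂ) / H * K * γH / (((γH : ℂ) + bH) * ((σH : ℂ) + bH))) *
        ((rM : ℂ) * ((H : ℂ) * (((γH : ℂ) + bH) * ((σH : ℂ) + bH)))) =
        (rM : ℂ) * ((βHM : ℂ) * K * γH) := by
      field_simp
    have hev : MM.mulVec (![(rM : ℂ) * ((H : ℂ) * (((γH : ℂ) + bH) * ((σH : ℂ) + bH))), 0,
        (βHM : ℂ) * K * γH, 0, 0, 0]) = (rM : ℂ) •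
        ![(rM : ℂ) * ((H : ℂ) * (((γH : ℂ) + bH) * ((σH : ℂ) + bH))), 0,
          (βHM : ℂ) * K * γH, 0, 0, 0] := by
      rw [hMMdef]; exact evA _ _ _ _ _ _ _ _ _ h1 h2
    rw [hVinv, hMM]
    exact specRad_aux MM rM hrMnn h3 _ hv hev
  · -- F_W case
    set MW : Matrix (Fin 6) (Fin 6) ℂ :=
      !![0, 0, (βMH : ℂ) * γM / (((γM : ℂ) + dM) * dM), (βMH : ℂ) / dM,
           (βWH : ℂ) * γW / (((γW : ℂ) + dW) * dW), (βWH : ℂ) / dW;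
         0, 0, 0, 0, 0, 0;
         0, 0, 0, 0, 0, 0;
         0, 0, 0, 0, 0, 0;
         (βHW : ℂ) / H * K * γH / (((γH : ℂ) + bH) * ((σH : ℂ) + bH)),
           (βHW : ℂ) / H * K / ((σH : ℂ) + bH), 0, 0, 0, 0;
         0, 0, 0, 0, 0, 0] with hMWdef
    have hMW : FW * W = MW := by
      ext i j
      fin_cases i <;> fin_cases j <;>
        simp [FW, hW, hMWdef, Matrix.mul_apply, Fin.sum_univ_six, cons_val_five,
          Matrix.vecHead, Matrix.vecTail, Function.comp] <;> ring
    set rW : ℝ := Real.sqrt (βHW * βWH * K * γW * γH /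
        (H * dW * (bH + σH) * (γW + dW) * (γH + bH))) with hrW
    have hfrac : (0:ℝ) ≤ βHW * βWH * K * γW * γH /
        (H * dW * (bH + σH) * (γW + dW) * (γH + bH)) := by positivity
    have hsqR : rW * rW = βHW * βWH * K * γW * γH /
        (H * dW * (bH + σH) * (γW + dW) * (γH + bH)) := by
      rw [hrW]; exact Real.mul_self_sqrt hfrac
    have hsqC : (rW : ℂ) * rW = ((βHW * βWH * K * γW * γH /
        (H * dW * (bH + σH) * (γW + dW) * (γH + bH)) : ℝ) : ℂ) := by
      rw [← Complex.ofReal_mul, hsqR]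
    have hdenW : (H : ℂ) * dW * ((bH : ℂ) + σH) * ((γW : ℂ) + dW) * ((γH : ℂ) + bH) ≠ 0 := by
      have : ((H * dW * (bH + σH) * (γW + dW) * (γH + bH) : ℝ) : ℂ) ≠ 0 :=
        Complex.ofReal_ne_zero.mpr (by positivity)
      push_cast at this; exact this
    have hs : (rW : ℂ) * rW = ((βWH : ℂ) * γW / (((γW : ℂ) + dW) * dW)) *
        ((βHW : ℂ) / H * K * γH / (((γH : ℂ) + bH) * ((σH : ℂ) + bH))) := by
      rw [hsqC]; push_cast; rw [div_eq_iff hdenW]; field_simp; ring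
    have h3 : MW * MW * MW = ((rW : ℂ) * rW) • MW := by
      rw [hMWdef]; exact tri3B _ _ _ _ _ _ _ hs
    have hrWnn : 0 ≤ rW := by rw [hrW]; positivity
    have hv : (![(rW : ℂ) * ((H : ℂ) * (((γH : ℂ) + bH) * ((σH : ℂ) + bH))), 0, 0, 0,
        (βHW : ℂ) * K * γH, 0] : Fin 6 → ℂ) ≠ 0 := by
      intro h
      have := congrFun h 4
      simp [mul_eq_zero, Complex.ofReal_eq_zero, hβHW.ne', hK.ne', hγH.ne'] at this
    have h1 : ((βWH : ℂ) * γW / (((γW : ℂ) + dW) * dW)) * ((βHW : ℂ) * K * γH) =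
        (rW : ℂ) * ((rW : ℂ) * ((H : ℂ) * (((γH : ℂ) + bH) * ((σH : ℂ) + bH)))) := by
      rw [show (rW : ℂ) * ((rW : ℂ) * ((H : ℂ) * (((γH : ℂ) + bH) * ((σH : ℂ) + bH)))) =
          ((rW : ℂ) * (rW : ℂ)) * ((H : ℂ) * (((γH : ℂ) + bH) * ((σH : ℂ) + bH))) from by ring,
        hs]
      field_simp
    have h2 : ((βHW : ℂ) / H * K * γH / (((γH : ℂ) + bH) * ((σH : ℂ) + bH))) *
        ((rW : ℂ) * ((H : ℂ) * (((γH : ℂ) + bH) * ((σH : ℂ) + bH)))) =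
        (rW : ℂ) * ((βHW : ℂ) * K * γH) := by
      field_simp
    have hev : MW.mulVec (![(rW : ℂ) * ((H : ℂ) * (((γH : ℂ) + bH) * ((σH : ℂ) + bH))), 0, 0, 0,
        (βHW : ℂ) * K * γH, 0]) = (rW : ℂ) •
        ![(rW : ℂ) * ((H : ℂ) * (((γH : ℂ) + bH) * ((σH : ℂ) + bH))), 0, 0, 0,
          (βHW : ℂ) * K * γH, 0] := by
      rw [hMWdef]; exact evB _ _ _ _ _ _ _ _ _ h1 h2
    rw [hVinv, hMW]
    exact specRad_aux MW rW hrWnn h3 _ hv hev
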